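/- Let A be an n×n quaternion matrix that possesses a group inverse X and a Moore–Penrose inverse Y. Then the matrix Z := X·A·Y satisfies A·Z = A·Y and R_r(Z) = R_r(A); that is, Z = A^# A A† is a right core inverse of A. -/
import Mathlib


/-- The matrix `Z = X·A·Y` (group inverse times `A` times Moore–Penrose inverse)
is a right core inverse of the quaternion matrix `A`:
`A·Z = A·Y` and the right column space of `Z` equals that of `A`. -/
theorem right_core_inverse_of_group_and_mp {n : ℕ}
    (A X Y : Matrix (Fin n) (Fin n) (Quaternion ℝ))
    (hX1 : A * X * A = A) (hX2 : X * A * X = X) (hX3 : A * X = X * A)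
    (hY1 : A * Y * A = A) (hY2 : Y * A * Y = Y)
    (hY3 : (A * Y).conjTranspose = A * Y) (hY4 : (Y * A).conjTranspose = Y * A) :
    A * (X * A * Y) = A * Y ∧
    {y : Fin n → Quaternion ℝ | ∃ x, (X * A * Y).mulVec x = y} =
      {y : Fin n → Quaternion ℝ | ∃ x, A.mulVec x = y} := by
  have hZ : X * A * Y = A * (X * X * (A * Y)) := by
    have : X = A * (X * X) := by
      calc X = X * A * X := hX2.symm
        _ = A * X * X := by rw [hX3]
        _ = A * (X * X) := by rw [mul_assoc]
    conv_lhs => rw [this]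
    noncomm_ring
  have hA : X * A * Y * (A * A) = A := by
    calc X * A * Y * (A * A) = X * (A * Y * A) * A := by noncomm_ring
      _ = X * A * A := by rw [hY1]
      _ = A * X * A := by rw [hX3]
      _ = A := hX1
  constructor
  · calc A * (X * A * Y) = A * X * A * Y := by noncomm_ring
      _ = A * Y := by rw [hX1]
  · ext y
    simp only [Set.mem_setOf_eq]
    constructor
    · rintro ⟨x, rfl⟩
      exact ⟨(X * X * (A * Y)).mulVec x, by rw [Matrix.mulVec_mulVec, ← hZ]⟩
    · rintro ⟨x, rfl⟩
      exact ⟨(A * A).mulVec x, by rw [Matrix.mulVec_mulVec, hA]⟩
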